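/- In ℓ₁ with unit vector basis (e_n), define A((x_n)) = (Σ_n x_{2n−1}) e₁ + (Σ_n x_{2n}) e₂, and for z ∈ span{e₁,e₂} with ‖z‖ ≤ 1 the operators B_z^+((x_n)) = (Σ_n x_n) z and B_z^-((x_n)) = (Σ_n x_{2n−1} − Σ_n x_{2n}) z; let W be the convex hull of all such B_z^±. Then: (a) for every x in the unit ball of ℓ₁ there exists B ∈ W with ‖A x − B x‖ = 0; (b) for every B ∈ W and every n₀ ∈ ℕ, ‖(A − B)|_{span{e_n : n ≥ n₀}}‖ ≥ 1/2. -/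

import Mathlib

open scoped ENNReal

noncomputable section

instance : Fact ((1 : ℝ≥0∞) ≤ 1) := ⟨le_rfl⟩

/-- The unit vector basis of `ℓ₁`. -/
noncomputable def e1 (n : ℕ) : lp (fun _ : ℕ => ℝ) 1 := lp.single 1 n (1 : ℝ)

lemma smul_e1 (c : ℝ) (k : ℕ) : c • e1 k = lp.single 1 k c := by
  rw [e1, ← lp.single_smul, smul_eq_mul, mul_one]

lemma norm_e1 (k : ℕ) : ‖e1 k‖ = 1 := by
  have := lp.norm_single (p := 1) (E := fun _ : ℕ => ℝ) (by norm_num) k (1:ℝ)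
  rw [e1, this, norm_one]

lemma coord2 (i j k : ℕ) (c d : ℝ) :
    (lp.single 1 i c + lp.single 1 j d : lp (fun _ : ℕ => ℝ) 1) k
      = (if k = i then c else 0) + (if k = j then d else 0) := by
  have : (lp.single 1 i c + lp.single 1 j d : lp (fun _ : ℕ => ℝ) 1) k
      = (lp.single 1 i c : lp (fun _ : ℕ => ℝ) 1) k
        + (lp.single 1 j d : lp (fun _ : ℕ => ℝ) 1) k := rfl
  rw [this, lp.single_apply, lp.single_apply, Pi.single_apply, Pi.single_apply]

lemma norm2 {i j : ℕ} (hij : i ≠ j) (c d : ℝ) :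
    ‖(lp.single 1 i c + lp.single 1 j d : lp (fun _ : ℕ => ℝ) 1)‖ = |c| + |d| := by
  classical
  have hp : (0:ℝ) < (1 : ℝ≥0∞).toReal := by norm_num
  have h := lp.norm_sum_single (p := 1) hp
    (fun k => if k = i then c else if k = j then d else 0) ({i, j} : Finset ℕ)
  rw [Finset.sum_pair hij, Finset.sum_pair hij] at h
  simp only [if_pos rfl, if_neg (Ne.symm hij), ENNReal.toReal_one, Real.rpow_one,
    Real.norm_eq_abs] at h
  simpa using h

lemma t_even (m : ℕ) (c d : ℝ) :
    ∑' n : ℕ, ((lp.single 1 (2*m) c + lp.single 1 (2*m+1) d : lp (fun _ : ℕ => ℝ) 1) (2*n)) = c := by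
  rw [show (fun n : ℕ => ((lp.single 1 (2*m) c + lp.single 1 (2*m+1) d : lp (fun _ : ℕ => ℝ) 1) (2*n)))
      = fun n => if n = m then c else 0 by
    funext n
    rw [coord2]
    split_ifs with h1 h2 h3 h2 h3 <;> first | omega | simp]
  exact tsum_eq_single m (fun n hn => if_neg hn) |>.trans (if_pos rfl)

lemma t_odd (m : ℕ) (c d : ℝ) :
    ∑' n : ℕ, ((lp.single 1 (2*m) c + lp.single 1 (2*m+1) d : lp (fun _ : ℕ => ℝ) 1) (2*n+1)) = d := by
  rw [show (fun n : ℕ => ((lp.single 1 (2*m) c + lp.single 1 (2*m+1) d : lp (fun _ : ℕ => ℝ) 1) (2*n+1)))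
      = fun n => if n = m then d else 0 by
    funext n
    rw [coord2]
    split_ifs with h1 h2 h3 h2 h3 <;> first | omega | simp]
  exact tsum_eq_single m (fun n hn => if_neg hn) |>.trans (if_pos rfl)

lemma t_all (m : ℕ) (c d : ℝ) :
    ∑' n : ℕ, ((lp.single 1 (2*m) c + lp.single 1 (2*m+1) d : lp (fun _ : ℕ => ℝ) 1) n) = c + d := by
  classical
  rw [tsum_eq_sum (s := ({2*m, 2*m+1} : Finset ℕ))
    (fun n hn => by
      rw [coord2]
      simp only [Finset.mem_insert, Finset.mem_singleton] at hn
      push_neg at hn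
      rw [if_neg hn.1, if_neg hn.2, add_zero])]
  rw [Finset.sum_pair (by omega), coord2, coord2]
  have h1 : 2*m ≠ 2*m+1 := by omega
  rw [if_pos rfl, if_neg h1, if_pos rfl, if_neg (Ne.symm h1)]
  ring

set_option maxHeartbeats 2000000 in
theorem statement18
    (A : lp (fun _ : ℕ => ℝ) 1 →L[ℝ] lp (fun _ : ℕ => ℝ) 1)
    (hA : ∀ x : lp (fun _ : ℕ => ℝ) 1,
      A x = (∑' n : ℕ, x (2 * n)) • e1 0 + (∑' n : ℕ, x (2 * n + 1)) • e1 1)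
    (Bp Bm : lp (fun _ : ℕ => ℝ) 1 → (lp (fun _ : ℕ => ℝ) 1 →L[ℝ] lp (fun _ : ℕ => ℝ) 1))
    (hBp : ∀ z x, Bp z x = (∑' n : ℕ, x n) • z)
    (hBm : ∀ z x, Bm z x = ((∑' n : ℕ, x (2 * n)) - ∑' n : ℕ, x (2 * n + 1)) • z)
    (W : Set (lp (fun _ : ℕ => ℝ) 1 →L[ℝ] lp (fun _ : ℕ => ℝ) 1))
    (hW : W = convexHull ℝ
      (Bp '' {z | z ∈ Submodule.span ℝ {e1 0, e1 1} ∧ ‖z‖ ≤ 1} ∪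
       Bm '' {z | z ∈ Submodule.span ℝ {e1 0, e1 1} ∧ ‖z‖ ≤ 1})) :
    (∀ x : lp (fun _ : ℕ => ℝ) 1, ‖x‖ ≤ 1 → ∃ B ∈ W, ‖A x - B x‖ = 0) ∧
    (∀ B ∈ W, ∀ n₀ : ℕ,
      ∃ y ∈ Submodule.span ℝ {v : lp (fun _ : ℕ => ℝ) 1 | ∃ n ≥ n₀, v = e1 n},
        ‖y‖ ≤ 1 ∧ (1 : ℝ) / 2 ≤ ‖A y - B y‖) := by
  have hp : (0:ℝ) < (1 : ℝ≥0∞).toReal := by norm_num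
  constructor
  · -- part (a)
    intro x hx
    have hsum : HasSum (fun i : ℕ => ‖x i‖) ‖x‖ := by
      simpa using lp.hasSum_norm hp x
    have hS : Summable fun i : ℕ => ‖x i‖ := hsum.summable
    have hSx : Summable fun i : ℕ => x i := hS.of_norm
    have he : Summable fun n : ℕ => x (2*n) :=
      hSx.comp_injective (fun p q h => by omega)
    have ho : Summable fun n : ℕ => x (2*n+1) :=
      hSx.comp_injective (fun p q h => by omega)
    have hne : Summable fun n : ℕ => ‖x (2*n)‖ :=
      hS.comp_injective (fun p q h => by omega)
    have hno : Summable fun n : ℕ => ‖x (2*n+1)‖ :=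
      hS.comp_injective (fun p q h => by omega)
    set a := ∑' n : ℕ, x (2 * n) with ha
    set b := ∑' n : ℕ, x (2 * n + 1) with hb
    have hs : ∑' n : ℕ, x n = a + b := (tsum_even_add_odd he ho).symm
    have hab : |a| + |b| ≤ 1 := by
      have h1 : ‖a‖ ≤ ∑' n : ℕ, ‖x (2*n)‖ := norm_tsum_le_tsum_norm hne
      have h2 : ‖b‖ ≤ ∑' n : ℕ, ‖x (2*n+1)‖ := norm_tsum_le_tsum_norm hno
      have h3 : (∑' n : ℕ, ‖x (2*n)‖) + ∑' n : ℕ, ‖x (2*n+1)‖ = ∑' n : ℕ, ‖x n‖ :=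
        tsum_even_add_odd (f := fun n => ‖x n‖) hne hno
      rw [Real.norm_eq_abs] at h1 h2
      rw [hsum.tsum_eq] at h3
      linarith
    have key : ∀ (Bc : lp (fun _ : ℕ => ℝ) 1 → (lp (fun _ : ℕ => ℝ) 1 →L[ℝ] lp (fun _ : ℕ => ℝ) 1))
        (c : ℝ),
        (Bc '' {z | z ∈ Submodule.span ℝ {e1 0, e1 1} ∧ ‖z‖ ≤ 1} ⊆ W) →
        (∀ z, Bc z x = c • z) → |c| = |a| + |b| → ∃ B ∈ W, ‖A x - B x‖ = 0 := by
      intro Bc c hsub happ hc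
      by_cases h0 : c = 0
      · rw [h0, abs_zero] at hc
        have ha0 : a = 0 := by
          have := abs_nonneg a; have := abs_nonneg b
          have : |a| = 0 := by linarith
          exact abs_eq_zero.mp this
        have hb0 : b = 0 := by
          have := abs_nonneg a; have := abs_nonneg b
          have : |b| = 0 := by linarith
          exact abs_eq_zero.mp this
        refine ⟨Bc 0, hsub ⟨0, ⟨Submodule.zero_mem _, by simp⟩, rfl⟩, ?_⟩
        rw [hA, happ, smul_zero, ← ha, ← hb, ha0, hb0, zero_smul, zero_smul, add_zero,
          sub_zero, norm_zero]
      · have hvmem : a • e1 0 + b • e1 1 ∈ Submodule.span ℝ {e1 0, e1 1} :=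
          Submodule.add_mem _
            (Submodule.smul_mem _ _ (Submodule.subset_span (by simp)))
            (Submodule.smul_mem _ _ (Submodule.subset_span (by simp)))
        have hvnorm : ‖a • e1 0 + b • e1 1‖ = |a| + |b| := by
          rw [smul_e1, smul_e1]; exact norm2 (by omega) a b
        refine ⟨Bc (c⁻¹ • (a • e1 0 + b • e1 1)),
          hsub ⟨c⁻¹ • (a • e1 0 + b • e1 1), ⟨Submodule.smul_mem _ _ hvmem, ?_⟩, rfl⟩, ?_⟩
        · rw [norm_smul, Real.norm_eq_abs, abs_inv, hvnorm, ← hc,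
            inv_mul_cancel₀ (abs_ne_zero.mpr h0)]
        · rw [hA, happ, smul_smul, mul_inv_cancel₀ h0, one_smul, ← ha, ← hb, sub_self,
            norm_zero]
    have hsubP : Bp '' {z | z ∈ Submodule.span ℝ {e1 0, e1 1} ∧ ‖z‖ ≤ 1} ⊆ W := by
      rw [hW]; exact fun B hB => subset_convexHull ℝ _ (Or.inl hB)
    have hsubM : Bm '' {z | z ∈ Submodule.span ℝ {e1 0, e1 1} ∧ ‖z‖ ≤ 1} ⊆ W := by
      rw [hW]; exact fun B hB => subset_convexHull ℝ _ (Or.inr hB)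
    rcases le_total 0 a with haa | haa <;> rcases le_total 0 b with hbb | hbb
    · exact key Bp (a+b) hsubP (fun z => by rw [hBp, hs])
        (by rw [abs_of_nonneg (add_nonneg haa hbb), abs_of_nonneg haa, abs_of_nonneg hbb])
    · exact key Bm (a-b) hsubM (fun z => by rw [hBm, ← ha, ← hb])
        (by rw [abs_of_nonneg (by linarith), abs_of_nonneg haa, abs_of_nonpos hbb]; ring)
    · exact key Bm (a-b) hsubM (fun z => by rw [hBm, ← ha, ← hb])
        (by rw [abs_of_nonpos (by linarith), abs_of_nonpos haa, abs_of_nonneg hbb]; ring)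
    · exact key Bp (a+b) hsubP (fun z => by rw [hBp, hs])
        (by rw [abs_of_nonpos (add_nonpos haa hbb), abs_of_nonpos haa, abs_of_nonpos hbb]; ring)
  · -- part (b)
    intro B hB n₀
    have habs : |(1:ℝ)/2| = 1/2 := abs_of_pos (by norm_num)
    have habsn : |(-(1/2):ℝ)| = 1/2 := by rw [abs_neg]; exact abs_of_pos (by norm_num)
    obtain ⟨y₁, y₂, hy₁mem, hy₂mem, hy₁n, hy₂n, hAn₁, hAn₂, hP₁, hP₂, hM₁, hM₂⟩ :
        ∃ y₁ y₂ : lp (fun _ : ℕ => ℝ) 1,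
          y₁ ∈ Submodule.span ℝ {v : lp (fun _ : ℕ => ℝ) 1 | ∃ n ≥ n₀, v = e1 n} ∧
          y₂ ∈ Submodule.span ℝ {v : lp (fun _ : ℕ => ℝ) 1 | ∃ n ≥ n₀, v = e1 n} ∧
          ‖y₁‖ ≤ 1 ∧ ‖y₂‖ ≤ 1 ∧ ‖A y₁‖ = 1 ∧ ‖A y₂‖ = 1 ∧
          (∀ z, Bp z y₁ = z) ∧ (∀ z, Bp z y₂ = 0) ∧
          (∀ z, Bm z y₁ = 0) ∧ (∀ z, Bm z y₂ = z) := by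
      refine ⟨lp.single 1 (2*n₀) (1/2) + lp.single 1 (2*n₀+1) (1/2),
        lp.single 1 (2*n₀) (1/2) + lp.single 1 (2*n₀+1) (-(1/2)), ?_, ?_, ?_, ?_, ?_, ?_,
        ?_, ?_, ?_, ?_⟩
      · rw [← smul_e1, ← smul_e1]
        exact Submodule.add_mem _
          (Submodule.smul_mem _ _ (Submodule.subset_span ⟨2*n₀, by omega, rfl⟩))
          (Submodule.smul_mem _ _ (Submodule.subset_span ⟨2*n₀+1, by omega, rfl⟩))
      · rw [← smul_e1, ← smul_e1]
        exact Submodule.add_mem _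
          (Submodule.smul_mem _ _ (Submodule.subset_span ⟨2*n₀, by omega, rfl⟩))
          (Submodule.smul_mem _ _ (Submodule.subset_span ⟨2*n₀+1, by omega, rfl⟩))
      · rw [norm2 (by omega), habs]; norm_num
      · rw [norm2 (by omega), habs, habsn]; norm_num
      · rw [hA, t_even, t_odd, smul_e1, smul_e1, norm2 (by omega), habs]; norm_num
      · rw [hA, t_even, t_odd, smul_e1, smul_e1, norm2 (by omega), habs, habsn]; norm_num
      · intro z; rw [hBp, t_all]; norm_num
      · intro z; rw [hBp, t_all]; norm_num
      · intro z; rw [hBm, t_even, t_odd]; norm_num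
      · intro z; rw [hBm, t_even, t_odd]; norm_num
    have hbound : ‖B y₁‖ + ‖B y₂‖ ≤ 1 := by
      have hsub : (Bp '' {z | z ∈ Submodule.span ℝ {e1 0, e1 1} ∧ ‖z‖ ≤ 1} ∪
          Bm '' {z | z ∈ Submodule.span ℝ {e1 0, e1 1} ∧ ‖z‖ ≤ 1}) ⊆
          {C : lp (fun _ : ℕ => ℝ) 1 →L[ℝ] lp (fun _ : ℕ => ℝ) 1 |
            ‖C y₁‖ + ‖C y₂‖ ≤ 1} := by
        rintro C (⟨z, ⟨hz, hz1⟩, rfl⟩ | ⟨z, ⟨hz, hz1⟩, rfl⟩)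
        · simpa [Set.mem_setOf_eq, hP₁ z, hP₂ z] using hz1
        · simpa [Set.mem_setOf_eq, hM₁ z, hM₂ z] using hz1
      have hconv : Convex ℝ {C : lp (fun _ : ℕ => ℝ) 1 →L[ℝ] lp (fun _ : ℕ => ℝ) 1 |
          ‖C y₁‖ + ‖C y₂‖ ≤ 1} := by
        intro C hC D hD θ σ hθ hσ hθσ
        simp only [Set.mem_setOf_eq] at hC hD ⊢
        rw [ContinuousLinearMap.add_apply, ContinuousLinearMap.add_apply,
          ContinuousLinearMap.smul_apply, ContinuousLinearMap.smul_apply,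
          ContinuousLinearMap.smul_apply, ContinuousLinearMap.smul_apply]
        have t₁ := norm_add_le (θ • C y₁) (σ • D y₁)
        have t₂ := norm_add_le (θ • C y₂) (σ • D y₂)
        simp only [norm_smul, Real.norm_eq_abs, abs_of_nonneg hθ,
          abs_of_nonneg hσ] at t₁ t₂
        nlinarith [norm_nonneg (C y₁), norm_nonneg (D y₁), norm_nonneg (C y₂),
          norm_nonneg (D y₂)]
      exact convexHull_min hsub hconv (hW ▸ hB)
    rcases le_or_gt (1/2 : ℝ) ‖A y₁ - B y₁‖ with h | h
    · exact ⟨y₁, hy₁mem, hy₁n, h⟩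
    · refine ⟨y₂, hy₂mem, hy₂n, ?_⟩
      by_contra h2
      push_neg at h2
      have t₁ := norm_sub_norm_le (A y₁) (B y₁)
      have t₂ := norm_sub_norm_le (A y₂) (B y₂)
      rw [hAn₁] at t₁
      rw [hAn₂] at t₂
      linarith
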